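/- One has the identity (θ, 0, 0, 0, 0) = 2ξ₆ − ξ₂ + ξ₃ − ξ₄ + ξ₅ in ℝ⁵, and the ℤ-submodule of ℝ⁵ generated by the two vectors (1,0,0,0,0) and (θ,0,0,0,0) is a free ℤ-module of rank 2 which is a direct summand of the ℤ-submodule generated by {ξ₁, ξ₂, ξ₃, ξ₄, ξ₅, ξ₆}. -/

import Mathlib

/-- The basis vectors `ξ₁, …, ξ₆` of the range of the Chern–Connes character `𝐓₂`,
in the case `0 < θ < 1/2` (so `c = -1`). -/
noncomputable def ξ (θ : ℝ) : Fin 6 → Fin 5 → ℝ :=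
  ![![1, 0, 0, 0, 0],
    ![1/2, 2, 0, 0, 0],
    ![1/2, 0, 2, 0, 0],
    ![1/2, 0, 0, 2, 0],
    ![1/2, 0, 0, 0, 2],
    ![θ/2, 1, -1, 1, -1]]

/-- `(θ,0,0,0,0) = 2ξ₆ - ξ₂ + ξ₃ - ξ₄ + ξ₅` in ℝ⁵, and the ℤ-submodule
generated by `(1,0,0,0,0)` and `(θ,0,0,0,0)` is free of rank 2 and a direct summand of
the ℤ-submodule generated by `{ξ₁, …, ξ₆}`. -/
theorem theta_vector_flip_case (θ : ℝ) (hθ : Irrational θ)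
    (h0 : 0 < θ) (h12 : θ < 1/2) :
    (![θ, 0, 0, 0, 0] : Fin 5 → ℝ)
      = (2 : ℤ) • ξ θ 5 - ξ θ 1 + ξ θ 2 - ξ θ 3 + ξ θ 4 ∧
    Module.Free ℤ
      (Submodule.span ℤ ({![1, 0, 0, 0, 0], ![θ, 0, 0, 0, 0]} : Set (Fin 5 → ℝ))) ∧
    Module.finrank ℤ
      (Submodule.span ℤ ({![1, 0, 0, 0, 0], ![θ, 0, 0, 0, 0]} : Set (Fin 5 → ℝ))) = 2 ∧
    Submodule.span ℤ ({![1, 0, 0, 0, 0], ![θ, 0, 0, 0, 0]} : Set (Fin 5 → ℝ))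
      ≤ Submodule.span ℤ (Set.range (ξ θ)) ∧
    ∃ P : Submodule ℤ (Fin 5 → ℝ),
      P ≤ Submodule.span ℤ (Set.range (ξ θ)) ∧
      Submodule.span ℤ ({![1, 0, 0, 0, 0], ![θ, 0, 0, 0, 0]} : Set (Fin 5 → ℝ)) ⊓ P = ⊥ ∧
      Submodule.span ℤ ({![1, 0, 0, 0, 0], ![θ, 0, 0, 0, 0]} : Set (Fin 5 → ℝ)) ⊔ P
        = Submodule.span ℤ (Set.range (ξ θ)) := by
  have x0 : ξ θ 0 = ![1, 0, 0, 0, 0] := rfl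
  have x1 : ξ θ 1 = ![1/2, 2, 0, 0, 0] := rfl
  have x2 : ξ θ 2 = ![1/2, 0, 2, 0, 0] := rfl
  have x3 : ξ θ 3 = ![1/2, 0, 0, 2, 0] := rfl
  have x4 : ξ θ 4 = ![1/2, 0, 0, 0, 2] := rfl
  have x5 : ξ θ 5 = ![θ/2, 1, -1, 1, -1] := rfl
  have key : (![θ, 0, 0, 0, 0] : Fin 5 → ℝ)
      = (2 : ℤ) • ξ θ 5 - ξ θ 1 + ξ θ 2 - ξ θ 3 + ξ θ 4 := by
    funext i
    fin_cases i <;> simp [x1, x2, x3, x4, x5] <;> ring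
  set e1 : Fin 5 → ℝ := ![1, 0, 0, 0, 0] with he1
  set te1 : Fin 5 → ℝ := ![θ, 0, 0, 0, 0] with hte1
  set v : Fin 2 → (Fin 5 → ℝ) := ![e1, te1] with hv
  have hset : ({e1, te1} : Set (Fin 5 → ℝ)) = Set.range v := by
    ext y; simp [hv, Fin.exists_fin_two]; tauto
  -- linear independence of e1, te1 over ℤ
  have hli : LinearIndependent ℤ v := by
    rw [hv, LinearIndependent.pair_iff]
    intro s t hst
    have h0' := congrFun hst 0
    simp [he1, hte1, Pi.smul_apply] at h0'
    -- h0' : (s:ℝ) + t * θ = 0  (in some form)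
    have ht : t = 0 := by
      by_contra ht
      have : (t : ℝ) * θ = ((-s : ℤ) : ℝ) := by push_cast; linarith
      exact (hθ.intCast_mul ht).ne_int (-s) this
    subst ht
    have hs : (s : ℝ) = 0 := by simpa using h0'
    exact ⟨by exact_mod_cast hs, rfl⟩
  have b := Module.Basis.span hli
  rw [← hset] at b
  have hfree : Module.Free ℤ (Submodule.span ℤ ({e1, te1} : Set (Fin 5 → ℝ))) :=
    Module.Free.of_basis b
  have hrank : Module.finrank ℤ
      (Submodule.span ℤ ({e1, te1} : Set (Fin 5 → ℝ))) = 2 := by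
    rw [Module.finrank_eq_card_basis b]; simp
  -- membership facts
  have hξ0 : ξ θ 0 = e1 := rfl
  have hNM : Submodule.span ℤ ({e1, te1} : Set (Fin 5 → ℝ))
      ≤ Submodule.span ℤ (Set.range (ξ θ)) := by
    rw [Submodule.span_le]
    rintro x hx
    rcases hx with rfl | rfl
    · exact Submodule.subset_span ⟨0, rfl⟩
    · rw [key]
      have m : ∀ i, ξ θ i ∈ Submodule.span ℤ (Set.range (ξ θ)) :=
        fun i => Submodule.subset_span ⟨i, rfl⟩
      exact Submodule.add_mem _ (Submodule.sub_mem _ (Submodule.add_mem _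
        (Submodule.sub_mem _ (Submodule.smul_mem _ _ (m 5)) (m 1)) (m 2)) (m 3)) (m 4)
  -- complement
  set w : Fin 4 → (Fin 5 → ℝ) := ![ξ θ 2, ξ θ 3, ξ θ 4, ξ θ 5] with hw
  refine ⟨key, hfree, hrank, hNM, Submodule.span ℤ (Set.range w), ?_, ?_, ?_⟩
  · rw [Submodule.span_le]
    rintro x ⟨i, rfl⟩
    fin_cases i
    · exact Submodule.subset_span ⟨2, rfl⟩
    · exact Submodule.subset_span ⟨3, rfl⟩
    · exact Submodule.subset_span ⟨4, rfl⟩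
    · exact Submodule.subset_span ⟨5, rfl⟩
  · rw [eq_bot_iff]
    intro x hx
    rw [Submodule.mem_inf] at hx
    obtain ⟨hxN, hxP⟩ := hx
    rw [hset, Submodule.mem_span_range_iff_exists_fun] at hxN
    rw [Submodule.mem_span_range_iff_exists_fun] at hxP
    obtain ⟨c, hc⟩ := hxN
    obtain ⟨d, hd⟩ := hxP
    have heq : ∀ j, (∑ i, d i • w i) j = (∑ i, c i • v i) j := by
      intro j; rw [hc, hd]
    have h1 := heq 1
    have h2 := heq 2
    have h3 := heq 3
    have h4 := heq 4
    simp [hw, hv, he1, hte1, x2, x3, x4, x5, Fin.sum_univ_succ, Finset.sum_apply, Pi.smul_apply] at h1 h2 h3 h4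
    have hs : (Fin.succ 2 : Fin 4) = 3 := rfl
    -- derive real coefficients zero
    have hd3 : (d 3 : ℝ) = 0 := by exact_mod_cast congrArg (Int.cast : ℤ → ℝ) h1
    have hd0 : (d 0 : ℝ) = 0 := by linarith
    have hd1 : (d 1 : ℝ) = 0 := by linarith
    have hd2 : (d 2 : ℝ) = 0 := by linarith
    have : x = 0 := by
      rw [← hd]
      funext j
      have hd0' : d 0 = 0 := by exact_mod_cast hd0
      have hd1' : d 1 = 0 := by exact_mod_cast hd1
      have hd2' : d 2 = 0 := by exact_mod_cast hd2
      simp [hw, x2, x3, x4, x5, Fin.sum_univ_succ, hs, h1, hd0', hd1', hd2']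
    simpa [this] using Submodule.zero_mem (⊥ : Submodule ℤ (Fin 5 → ℝ))
  · apply le_antisymm
    · exact sup_le hNM (by
        rw [Submodule.span_le]
        rintro x ⟨i, rfl⟩
        fin_cases i
        · exact Submodule.subset_span ⟨2, rfl⟩
        · exact Submodule.subset_span ⟨3, rfl⟩
        · exact Submodule.subset_span ⟨4, rfl⟩
        · exact Submodule.subset_span ⟨5, rfl⟩)
    · rw [Submodule.span_le]
      rintro x ⟨i, rfl⟩
      have mN : ∀ y ∈ ({e1, te1} : Set (Fin 5 → ℝ)),
          y ∈ Submodule.span ℤ ({e1, te1} : Set (Fin 5 → ℝ)) ⊔ Submodule.span ℤ (Set.range w) :=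
        fun y hy => Submodule.mem_sup_left (Submodule.subset_span hy)
      have mP : ∀ k : Fin 4,
          w k ∈ Submodule.span ℤ ({e1, te1} : Set (Fin 5 → ℝ)) ⊔ Submodule.span ℤ (Set.range w) :=
        fun k => Submodule.mem_sup_right (Submodule.subset_span ⟨k, rfl⟩)
      fin_cases i
      · exact mN e1 (Set.mem_insert _ _)
      · -- ξ θ 1 = 2 • ξ θ 5 + ξ θ 2 - ξ θ 3 + ξ θ 4 - te1
        have hξ1 : ξ θ 1 = ((2 : ℤ) • w 3 + w 0 - w 1 + w 2) - te1 := by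
          funext j
          fin_cases j <;> simp [hw, x1, x2, x3, x4, x5, hte1] <;> ring
        show ξ θ 1 ∈ _
        rw [hξ1]
        exact Submodule.sub_mem _
          (Submodule.add_mem _ (Submodule.sub_mem _ (Submodule.add_mem _
            (Submodule.smul_mem _ _ (mP 3)) (mP 0)) (mP 1)) (mP 2))
          (mN te1 (Set.mem_insert_iff.2 (Or.inr rfl)))
      · exact mP 0
      · exact mP 1
      · exact mP 2
      · exact mP 3
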